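/- The set Γ_π is a subgroup of the group G = (ℂ⁴, *): it contains the identity (0,0,0,0), it is closed under the operation *, and it is closed under taking inverses in G. -/

import Mathlib

section Helpers
open Matrix Complex

noncomputable def GInts : Subring ℂ where
  carrier := {z | ∃ p q : ℤ, z = (p : ℂ) + (q : ℂ) * I}
  zero_mem' := ⟨0, 0, by simp⟩
  one_mem' := ⟨1, 0, by simp⟩
  add_mem' := by
    rintro x y ⟨p, q, rfl⟩ ⟨r, s, rfl⟩
    exact ⟨p + r, q + s, by push_cast; ring⟩
  neg_mem' := by
    rintro x ⟨p, q, rfl⟩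
    exact ⟨-p, -q, by push_cast; ring⟩
  mul_mem' := by
    rintro x y ⟨p, q, rfl⟩ ⟨r, s, rfl⟩
    refine ⟨p * r - q * s, p * s + q * r, ?_⟩
    push_cast
    ring_nf
    rw [Complex.I_sq]
    ring

lemma intCast_mem_GInts (n : ℤ) : (n : ℂ) ∈ GInts := ⟨n, 0, by simp⟩

lemma neg_one_zpow_mem_GInts (b : ℤ) : ((-1 : ℂ) ^ b) ∈ GInts := by
  rcases Int.even_or_odd b with hb | hb
  · rw [hb.neg_one_zpow]; exact GInts.one_mem
  · rw [hb.neg_one_zpow]; exact GInts.neg_mem GInts.one_mem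

lemma neg_one_zpow_neg' (b : ℤ) : ((-1 : ℂ) ^ (-b)) = (-1 : ℂ) ^ b := by
  rw [_root_.zpow_neg, ← _root_.inv_zpow, inv_neg, inv_one]

lemma det2 (M : Matrix (Fin 2) (Fin 2) ℂ) (v w : Fin 2 → ℂ) :
    M.mulVec v 0 * M.mulVec w 1 - M.mulVec v 1 * M.mulVec w 0
      = M.det * (v 0 * w 1 - v 1 * w 0) := by
  simp [Matrix.mulVec, dotProduct, Fin.sum_univ_two, Matrix.det_fin_two]
  ring

noncomputable def uA (A : Matrix (Fin 2) (Fin 2) ℤ) (hA : A.det = 1) :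
    (Matrix (Fin 2) (Fin 2) ℤ)ˣ :=
  ⟨A, A.adjugate, by simp [Matrix.mul_adjugate, hA], by simp [Matrix.adjugate_mul, hA]⟩

noncomputable def Nmat (A : Matrix (Fin 2) (Fin 2) ℤ) (hA : A.det = 1) (a : ℤ) :
    Matrix (Fin 2) (Fin 2) ℂ :=
  ((uA A hA ^ a : (Matrix (Fin 2) (Fin 2) ℤ)ˣ) : Matrix (Fin 2) (Fin 2) ℤ).map
    (Int.cast : ℤ → ℂ)

lemma map_mul_int (X Y : Matrix (Fin 2) (Fin 2) ℤ) :
    (X * Y).map (Int.cast : ℤ → ℂ) = X.map Int.cast * Y.map Int.cast :=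
  Matrix.map_mul (f := Int.castRingHom ℂ)

lemma Nmat_zero (A hA) : Nmat A hA 0 = 1 := by
  simp [Nmat, Matrix.map_one]

lemma Nmat_add_one (A hA) (a : ℤ) :
    Nmat A hA (a + 1) = A.map (Int.cast : ℤ → ℂ) * Nmat A hA a := by
  have h : uA A hA ^ (a + 1) = uA A hA * uA A hA ^ a := by
    rw [add_comm, _root_.zpow_add, zpow_one]
  simp only [Nmat, h, Units.val_mul, map_mul_int]
  rfl

lemma Nmat_sub_one (A hA) (a : ℤ) :
    Nmat A hA (a - 1) = ((uA A hA)⁻¹ : (Matrix (Fin 2) (Fin 2) ℤ)ˣ).val.map (Int.cast : ℤ → ℂ) * Nmat A hA a := by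
  have h : uA A hA ^ (a - 1) = (uA A hA)⁻¹ * uA A hA ^ a := by
    rw [sub_eq_add_neg, add_comm, _root_.zpow_add, _root_.zpow_neg_one]
  simp only [Nmat, h, Units.val_mul, map_mul_int]

lemma Nmat_mulVec_mem (A hA) (a : ℤ) (v : Fin 2 → ℂ) (hv : ∀ j, v j ∈ GInts) (i : Fin 2) :
    (Nmat A hA a).mulVec v i ∈ GInts := by
  have h : (Nmat A hA a).mulVec v i =
      (((uA A hA ^ a : (Matrix (Fin 2) (Fin 2) ℤ)ˣ) : Matrix (Fin 2) (Fin 2) ℤ) i 0 : ℂ) * v 0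
      + (((uA A hA ^ a : (Matrix (Fin 2) (Fin 2) ℤ)ˣ) : Matrix (Fin 2) (Fin 2) ℤ) i 1 : ℂ) * v 1 := by
    simp [Nmat, Matrix.mulVec, dotProduct, Fin.sum_univ_two]
  rw [h]
  exact add_mem (mul_mem (intCast_mem_GInts _) (hv 0)) (mul_mem (intCast_mem_GInts _) (hv 1))


lemma comm_key (A : Matrix (Fin 2) (Fin 2) ℤ) (hA : A.det = 1) (lam : ℝ)
    (P : Matrix (Fin 2) (Fin 2) ℝ) (hP : IsUnit P.det)
    (hconj : P * A.map (Int.cast : ℤ → ℝ) * P⁻¹ =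
      Matrix.diagonal ![Real.exp (-lam), Real.exp lam]) (a : ℤ) :
    Matrix.diagonal ![Complex.exp (-((lam : ℂ) * (a : ℂ))), Complex.exp ((lam : ℂ) * (a : ℂ))]
      * P.map Complex.ofReal
    = P.map Complex.ofReal * Nmat A hA a := by
  have h1 : P * A.map (Int.cast : ℤ → ℝ) =
      Matrix.diagonal ![Real.exp (-lam), Real.exp lam] * P := by
    rw [← hconj, Matrix.mul_assoc, Matrix.nonsing_inv_mul P hP, Matrix.mul_one]
  have hmapR : ∀ (X Y : Matrix (Fin 2) (Fin 2) ℝ),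
      (X * Y).map (Complex.ofReal) = X.map Complex.ofReal * Y.map Complex.ofReal :=
    fun X Y => Matrix.map_mul (f := Complex.ofRealHom)
  have hAc : (A.map (Int.cast : ℤ → ℝ)).map Complex.ofReal
      = A.map (Int.cast : ℤ → ℂ) := by
    ext i j; simp [Matrix.map_apply]
  have hdiag : (Matrix.diagonal ![Real.exp (-lam), Real.exp lam]).map Complex.ofReal
      = Matrix.diagonal ![Complex.exp (-(lam : ℂ)), Complex.exp (lam : ℂ)] := by
    rw [Matrix.diagonal_map (by simp)]
    refine congrArg Matrix.diagonal ?_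
    funext i; fin_cases i <;> simp [Complex.ofReal_exp]
  have hc : Matrix.diagonal ![Complex.exp (-(lam : ℂ)), Complex.exp (lam : ℂ)]
      * P.map Complex.ofReal
      = P.map Complex.ofReal * A.map (Int.cast : ℤ → ℂ) := by
    have := congrArg (fun M => M.map Complex.ofReal) h1
    simp only [hmapR, hAc, hdiag] at this
    exact this.symm
  have hAi : A.map (Int.cast : ℤ → ℂ) *
      ((uA A hA)⁻¹ : (Matrix (Fin 2) (Fin 2) ℤ)ˣ).val.map (Int.cast : ℤ → ℂ) = 1 := by
    rw [← map_mul_int]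
    have h2 : (uA A hA).val * ((uA A hA)⁻¹ : (Matrix (Fin 2) (Fin 2) ℤ)ˣ).val = 1 := by
      rw [← Units.val_mul, mul_inv_cancel, Units.val_one]
    rw [show (uA A hA).val = A from rfl] at h2
    rw [h2, Matrix.map_one _ Int.cast_zero Int.cast_one]
  have hE : Matrix.diagonal ![Complex.exp (lam : ℂ), Complex.exp (-(lam : ℂ))]
      * Matrix.diagonal ![Complex.exp (-(lam : ℂ)), Complex.exp (lam : ℂ)] = 1 := by
    rw [Matrix.diagonal_mul_diagonal]
    have h3 : (fun i => ![Complex.exp (lam : ℂ), Complex.exp (-(lam : ℂ))] i *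
        ![Complex.exp (-(lam : ℂ)), Complex.exp (lam : ℂ)] i) = fun _ => (1 : ℂ) := by
      funext i; fin_cases i <;> simp [← Complex.exp_add]
    rw [h3, Matrix.diagonal_one]
  have hcInv : Matrix.diagonal ![Complex.exp (lam : ℂ), Complex.exp (-(lam : ℂ))]
      * P.map Complex.ofReal
      = P.map Complex.ofReal *
        ((uA A hA)⁻¹ : (Matrix (Fin 2) (Fin 2) ℤ)ˣ).val.map (Int.cast : ℤ → ℂ) := by
    calc Matrix.diagonal ![Complex.exp (lam : ℂ), Complex.exp (-(lam : ℂ))] * P.map Complex.ofReal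
        = Matrix.diagonal ![Complex.exp (lam : ℂ), Complex.exp (-(lam : ℂ))] * P.map Complex.ofReal
          * (A.map (Int.cast : ℤ → ℂ) *
            ((uA A hA)⁻¹ : (Matrix (Fin 2) (Fin 2) ℤ)ˣ).val.map (Int.cast : ℤ → ℂ)) := by
          rw [hAi, Matrix.mul_one]
      _ = Matrix.diagonal ![Complex.exp (lam : ℂ), Complex.exp (-(lam : ℂ))] *
          (Matrix.diagonal ![Complex.exp (-(lam : ℂ)), Complex.exp (lam : ℂ)]
            * P.map Complex.ofReal) *
          ((uA A hA)⁻¹ : (Matrix (Fin 2) (Fin 2) ℤ)ˣ).val.map (Int.cast : ℤ → ℂ) := by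
          rw [hc]; noncomm_ring
      _ = P.map Complex.ofReal *
          ((uA A hA)⁻¹ : (Matrix (Fin 2) (Fin 2) ℤ)ˣ).val.map (Int.cast : ℤ → ℂ) := by
          rw [← Matrix.mul_assoc, hE, Matrix.one_mul]
  induction a using Int.induction_on with
  | zero =>
      simp only [Int.cast_zero, mul_zero, neg_zero, Complex.exp_zero, Nmat_zero]
      have h4 : (![(1:ℂ), 1]) = fun _ => (1:ℂ) := by funext i; fin_cases i <;> rfl
      rw [h4, Matrix.diagonal_one, Matrix.one_mul, Matrix.mul_one]
  | succ a ih =>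
      have hd : Matrix.diagonal ![Complex.exp (-((lam : ℂ) * (((a : ℤ) + 1 : ℤ) : ℂ))),
            Complex.exp ((lam : ℂ) * (((a : ℤ) + 1 : ℤ) : ℂ))]
          = Matrix.diagonal ![Complex.exp (-(lam : ℂ)), Complex.exp (lam : ℂ)] *
            Matrix.diagonal ![Complex.exp (-((lam : ℂ) * ((a : ℤ) : ℂ))),
              Complex.exp ((lam : ℂ) * ((a : ℤ) : ℂ))] := by
        have e1 : Complex.exp (-((lam : ℂ) * (((a : ℤ) + 1 : ℤ) : ℂ)))
            = Complex.exp (-(lam : ℂ)) * Complex.exp (-((lam : ℂ) * ((a : ℤ) : ℂ))) := by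
          rw [← Complex.exp_add]; congr 1; push_cast; ring
        have e2 : Complex.exp ((lam : ℂ) * (((a : ℤ) + 1 : ℤ) : ℂ))
            = Complex.exp (lam : ℂ) * Complex.exp ((lam : ℂ) * ((a : ℤ) : ℂ)) := by
          rw [← Complex.exp_add]; congr 1; push_cast; ring
        rw [Matrix.diagonal_mul_diagonal]
        refine congrArg Matrix.diagonal ?_
        funext i; fin_cases i
        · exact e1
        · exact e2
      rw [hd, Matrix.mul_assoc, ih, ← Matrix.mul_assoc, hc, Matrix.mul_assoc, ← Nmat_add_one]
  | pred a ih =>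
      have hd : Matrix.diagonal ![Complex.exp (-((lam : ℂ) * ((-(a:ℤ) - 1 : ℤ) : ℂ))),
            Complex.exp ((lam : ℂ) * ((-(a:ℤ) - 1 : ℤ) : ℂ))]
          = Matrix.diagonal ![Complex.exp (lam : ℂ), Complex.exp (-(lam : ℂ))] *
            Matrix.diagonal ![Complex.exp (-((lam : ℂ) * ((-(a:ℤ) : ℤ) : ℂ))),
              Complex.exp ((lam : ℂ) * ((-(a:ℤ) : ℤ) : ℂ))] := by
        have e1 : Complex.exp (-((lam : ℂ) * ((-(a:ℤ) - 1 : ℤ) : ℂ)))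
            = Complex.exp (lam : ℂ) * Complex.exp (-((lam : ℂ) * ((-(a:ℤ) : ℤ) : ℂ))) := by
          rw [← Complex.exp_add]; congr 1; push_cast; ring
        have e2 : Complex.exp ((lam : ℂ) * ((-(a:ℤ) - 1 : ℤ) : ℂ))
            = Complex.exp (-(lam : ℂ)) * Complex.exp ((lam : ℂ) * ((-(a:ℤ) : ℤ) : ℂ)) := by
          rw [← Complex.exp_add]; congr 1; push_cast; ring
        rw [Matrix.diagonal_mul_diagonal]
        refine congrArg Matrix.diagonal ?_
        funext i; fin_cases i
        · exact e1
        · exact e2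
      rw [hd, Matrix.mul_assoc, ih, ← Matrix.mul_assoc, hcInv, Matrix.mul_assoc, ← Nmat_sub_one]

lemma move (A : Matrix (Fin 2) (Fin 2) ℤ) (hA : A.det = 1) (lam : ℝ)
    (P : Matrix (Fin 2) (Fin 2) ℝ) (hP : IsUnit P.det)
    (hconj : P * A.map (Int.cast : ℤ → ℝ) * P⁻¹ =
      Matrix.diagonal ![Real.exp (-lam), Real.exp lam]) (a b : ℤ) (v : Fin 2 → ℂ) :
    (Matrix.diagonal ![Complex.exp (-(((lam * a : ℝ) : ℂ) + ((Real.pi * b : ℝ) : ℂ) * I)),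
        Complex.exp (((lam * a : ℝ) : ℂ) + ((Real.pi * b : ℝ) : ℂ) * I)]).mulVec
      ((P.map Complex.ofReal).mulVec v)
    = (P.map Complex.ofReal).mulVec
        (fun j => (-1 : ℂ) ^ b * (Nmat A hA a).mulVec v j) := by
  have e1 : Complex.exp (((lam * a : ℝ) : ℂ) + ((Real.pi * b : ℝ) : ℂ) * I)
      = (-1 : ℂ) ^ b * Complex.exp ((lam : ℂ) * ((a : ℤ) : ℂ)) := by
    push_cast
    rw [Complex.exp_add,
      show ((Real.pi : ℂ) * (b : ℂ) * I) = ((b : ℤ) : ℂ) * ((Real.pi : ℂ) * I) by push_cast; ring,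
      Complex.exp_int_mul, Complex.exp_pi_mul_I]
    ring
  have e2 : Complex.exp (-(((lam * a : ℝ) : ℂ) + ((Real.pi * b : ℝ) : ℂ) * I))
      = (-1 : ℂ) ^ b * Complex.exp (-((lam : ℂ) * ((a : ℤ) : ℂ))) := by
    push_cast
    rw [neg_add, Complex.exp_add,
      show (-((Real.pi : ℂ) * (b : ℂ) * I)) = ((-b : ℤ) : ℂ) * ((Real.pi : ℂ) * I) by push_cast; ring,
      Complex.exp_int_mul, Complex.exp_pi_mul_I, neg_one_zpow_neg']
    ring
  rw [e1, e2]
  have hsm : ![(-1 : ℂ) ^ b * Complex.exp (-((lam : ℂ) * ((a : ℤ) : ℂ))),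
        (-1 : ℂ) ^ b * Complex.exp ((lam : ℂ) * ((a : ℤ) : ℂ))]
      = (-1 : ℂ) ^ b • ![Complex.exp (-((lam : ℂ) * ((a : ℤ) : ℂ))),
        Complex.exp ((lam : ℂ) * ((a : ℤ) : ℂ))] := by
    funext i; fin_cases i <;> simp
  rw [hsm, Matrix.diagonal_smul, Matrix.smul_mulVec, Matrix.mulVec_mulVec,
    comm_key A hA lam P hP hconj a, ← Matrix.mulVec_mulVec, ← Matrix.mulVec_smul]
  rfl

lemma mem_GInts_iff {z : ℂ} : z ∈ GInts ↔ ∃ p q : ℤ, z = (p : ℂ) + (q : ℂ) * I := Iff.rfl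

end Helpers



/-- The multiplication `*` on `ℂ⁴`. -/
noncomputable def Gmul (y z : ℂ × ℂ × ℂ × ℂ) : ℂ × ℂ × ℂ × ℂ :=
  (z.1 + y.1,
   Complex.exp (-y.1) * z.2.1 + y.2.1,
   Complex.exp y.1 * z.2.2.1 + y.2.2.1,
   z.2.2.2 + y.2.2.2 + (1 / 2) * Complex.exp y.1 * y.2.1 * z.2.2.1
     - (1 / 2) * Complex.exp (-y.1) * y.2.2.1 * z.2.1)

/-- Inversion in `G = (ℂ⁴, *)`. -/
noncomputable def Ginv (z : ℂ × ℂ × ℂ × ℂ) : ℂ × ℂ × ℂ × ℂ :=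
  (-z.1, -(Complex.exp z.1 * z.2.1), -(Complex.exp (-z.1) * z.2.2.1), -z.2.2.2)

/-- The set `Γ_μ ⊆ ℂ⁴` of points `(λa+iμb, (Pm)₁, (Pm)₂, (1/2)det(P)(h+ik))` with
`a,b,h,k ∈ ℤ` and `m = m₁ + i m₂`, `m₁, m₂ ∈ ℤ²`; `P` acts ℂ-linearly on `ℂ²`. -/
noncomputable def Gamma (P : Matrix (Fin 2) (Fin 2) ℝ) (lam μ : ℝ) :
    Set (ℂ × ℂ × ℂ × ℂ) :=
  { z | ∃ (a b h k : ℤ) (m₁ m₂ : Fin 2 → ℤ),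
      z = (((lam * a : ℝ) : ℂ) + ((μ * b : ℝ) : ℂ) * Complex.I,
           (P.map (Complex.ofReal)).mulVec (fun j => (m₁ j : ℂ) + (m₂ j : ℂ) * Complex.I) 0,
           (P.map (Complex.ofReal)).mulVec (fun j => (m₁ j : ℂ) + (m₂ j : ℂ) * Complex.I) 1,
           (1 / 2 : ℂ) * ((P.det : ℝ) : ℂ) * ((h : ℂ) + (k : ℂ) * Complex.I)) }


open Matrix Complex in
lemma mem_gamma_iff {P : Matrix (Fin 2) (Fin 2) ℝ} {lam μ : ℝ} {z : ℂ × ℂ × ℂ × ℂ} :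
    z ∈ Gamma P lam μ ↔ ∃ (a b : ℤ) (v : Fin 2 → ℂ) (g : ℂ),
      (∀ j, v j ∈ GInts) ∧ (g ∈ GInts) ∧
      z = (((lam * a : ℝ) : ℂ) + ((μ * b : ℝ) : ℂ) * I,
           (P.map Complex.ofReal).mulVec v 0,
           (P.map Complex.ofReal).mulVec v 1,
           (1 / 2 : ℂ) * ((P.det : ℝ) : ℂ) * g) := by
  constructor
  · rintro ⟨a, b, h, k, m₁, m₂, rfl⟩
    exact ⟨a, b, fun j => (m₁ j : ℂ) + (m₂ j : ℂ) * I, (h : ℂ) + (k : ℂ) * I,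
      fun j => ⟨m₁ j, m₂ j, rfl⟩, ⟨h, k, rfl⟩, rfl⟩
  · rintro ⟨a, b, v, g, hv, ⟨h, k, rfl⟩, rfl⟩
    obtain ⟨p0, q0, h0⟩ := hv 0
    obtain ⟨p1, q1, h1⟩ := hv 1
    refine ⟨a, b, h, k, ![p0, p1], ![q0, q1], ?_⟩
    have hveq : (fun j => ((![p0, p1] j : ℤ) : ℂ) + ((![q0, q1] j : ℤ) : ℂ) * I) = v := by
      funext j; fin_cases j
      · simpa using h0.symm
      · simpa using h1.symm
    rw [hveq]

/-- `Γ_π` is a subgroup of `G = (ℂ⁴, *)`: it contains the identity, it is closed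
under `*`, and it is closed under taking inverses in `G`. -/
theorem stmt3 (A : Matrix (Fin 2) (Fin 2) ℤ) (hA : A.det = 1)
    (lam : ℝ) (hlam : 0 < lam)
    (P : Matrix (Fin 2) (Fin 2) ℝ) (hP : IsUnit P.det)
    (hconj : P * A.map (Int.cast : ℤ → ℝ) * P⁻¹ =
      Matrix.diagonal ![Real.exp (-lam), Real.exp lam]) :
    (((0 : ℂ), (0 : ℂ), (0 : ℂ), (0 : ℂ)) ∈ Gamma P lam Real.pi) ∧
    (∀ x ∈ Gamma P lam Real.pi, ∀ y ∈ Gamma P lam Real.pi,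
      Gmul x y ∈ Gamma P lam Real.pi) ∧
    (∀ x ∈ Gamma P lam Real.pi, Ginv x ∈ Gamma P lam Real.pi) := by
  have hdet : (P.map Complex.ofReal).det = ((P.det : ℝ) : ℂ) := by
    rw [show P.map Complex.ofReal = Complex.ofRealHom.mapMatrix P from rfl, ← RingHom.map_det]
    rfl
  refine ⟨?_, ?_, ?_⟩
  · refine ⟨0, 0, 0, 0, 0, 0, ?_⟩
    have hvec : (fun j => (((0 : Fin 2 → ℤ) j : ℤ) : ℂ) + (((0 : Fin 2 → ℤ) j : ℤ) : ℂ) * Complex.I)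
        = (0 : Fin 2 → ℂ) := by
      funext j; simp
    rw [hvec, Matrix.mulVec_zero]
    simp
  · rintro x hx y hy
    rw [mem_gamma_iff] at hx hy ⊢
    obtain ⟨ax, bx, vx, gx, hvx, hgx, rfl⟩ := hx
    obtain ⟨ay, by', vy, gy, hvy, hgy, rfl⟩ := hy
    have hm := move A hA lam P hP hconj ax bx vy
    set v2 : Fin 2 → ℂ := fun j => (-1 : ℂ) ^ bx * (Nmat A hA ax).mulVec vy j with hv2def
    have hv2 : ∀ j, v2 j ∈ GInts := fun j =>
      mul_mem (neg_one_zpow_mem_GInts bx) (Nmat_mulVec_mem A hA ax vy hvy j)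
    have h0 : Complex.exp (-(((lam * ax : ℝ) : ℂ) + ((Real.pi * bx : ℝ) : ℂ) * Complex.I)) *
        (P.map Complex.ofReal).mulVec vy 0 = (P.map Complex.ofReal).mulVec v2 0 := by
      have := congrFun hm 0
      simpa [Matrix.mulVec_diagonal] using this
    have h1 : Complex.exp ((((lam * ax : ℝ) : ℂ) + ((Real.pi * bx : ℝ) : ℂ) * Complex.I)) *
        (P.map Complex.ofReal).mulVec vy 1 = (P.map Complex.ofReal).mulVec v2 1 := by
      have := congrFun hm 1
      simpa [Matrix.mulVec_diagonal] using this
    have hdd := det2 (P.map Complex.ofReal) vx v2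
    rw [hdet] at hdd
    refine ⟨ax + ay, bx + by', (fun j => v2 j + vx j),
      gy + gx + (vx 0 * v2 1 - vx 1 * v2 0), fun j => add_mem (hv2 j) (hvx j),
      add_mem (add_mem hgy hgx)
        (sub_mem (mul_mem (hvx 0) (hv2 1)) (mul_mem (hvx 1) (hv2 0))), ?_⟩
    simp only [Gmul, Prod.mk.injEq]
    refine ⟨?_, ?_, ?_, ?_⟩
    · push_cast; ring
    · rw [show (fun j => v2 j + vx j) = v2 + vx from rfl, Matrix.mulVec_add, Pi.add_apply, ← h0]
    · rw [show (fun j => v2 j + vx j) = v2 + vx from rfl, Matrix.mulVec_add, Pi.add_apply, ← h1]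
    · linear_combination ((1:ℂ)/2) * ((P.map Complex.ofReal).mulVec vx 0) * h1
        - ((1:ℂ)/2) * ((P.map Complex.ofReal).mulVec vx 1) * h0 + ((1:ℂ)/2) * hdd
  · rintro x hx
    rw [mem_gamma_iff] at hx ⊢
    obtain ⟨a, b, v, g, hv, hg, rfl⟩ := hx
    have hm := move A hA lam P hP hconj (-a) (-b) v
    set v3 : Fin 2 → ℂ := fun j => (-1 : ℂ) ^ (-b) * (Nmat A hA (-a)).mulVec v j with hv3def
    have hv3 : ∀ j, v3 j ∈ GInts := fun j =>
      mul_mem (neg_one_zpow_mem_GInts (-b)) (Nmat_mulVec_mem A hA (-a) v hv j)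
    have harg : (((lam * (-a : ℤ) : ℝ) : ℂ) + ((Real.pi * (-b : ℤ) : ℝ) : ℂ) * Complex.I)
        = -((((lam * a : ℝ) : ℂ) + ((Real.pi * b : ℝ) : ℂ) * Complex.I)) := by push_cast; ring
    rw [harg] at hm
    have h0 : Complex.exp ((((lam * a : ℝ) : ℂ) + ((Real.pi * b : ℝ) : ℂ) * Complex.I)) *
        (P.map Complex.ofReal).mulVec v 0 = (P.map Complex.ofReal).mulVec v3 0 := by
      have := congrFun hm 0
      simpa [Matrix.mulVec_diagonal] using this
    have h1 : Complex.exp (-(((lam * a : ℝ) : ℂ) + ((Real.pi * b : ℝ) : ℂ) * Complex.I)) *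
        (P.map Complex.ofReal).mulVec v 1 = (P.map Complex.ofReal).mulVec v3 1 := by
      have := congrFun hm 1
      simpa [Matrix.mulVec_diagonal] using this
    refine ⟨-a, -b, (fun j => -(v3 j)), -g, fun j => neg_mem (hv3 j), neg_mem hg, ?_⟩
    simp only [Ginv, Prod.mk.injEq]
    refine ⟨?_, ?_, ?_, ?_⟩
    · push_cast; ring
    · rw [show (fun j => -(v3 j)) = -v3 from rfl, Matrix.mulVec_neg, Pi.neg_apply, ← h0]
    · rw [show (fun j => -(v3 j)) = -v3 from rfl, Matrix.mulVec_neg, Pi.neg_apply, ← h1]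
    · ring
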